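/- Let X be a real Hilbert space, A : X → X a bounded linear operator, x†, x̄ ∈ X with A(x† − x̄) ≠ 0, β ∈ [0,1), ψ an index function, and ε₀ > 0. Assume that for every ε ∈ (0, ε₀] the point x = x† + ε(x̄ − x†) satisfies the variational inequality ⟨x† − x̄, x† − x⟩ ≤ β‖x† − x‖² + ψ(‖A(x − x†)‖). Then liminf_{t→0+} ψ(t)/t ≥ ‖x† − x̄‖²/‖A(x† − x̄)‖ > 0. -/

import Mathlib

open RealInnerProductSpace Filter

/-- In the linear case, the Tikhonov-type variational source condition forces the index
function ψ to decay to zero not faster than linearly: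
liminf_{t→0+} ψ(t)/t ≥ ‖x†−x̄‖²/‖A(x†−x̄)‖ > 0.  The liminf bound is expressed in the
robust form "for every c below the bound, eventually ψ(t)/t ≥ c as t → 0+". -/
theorem stmt_7 {X : Type*} [NormedAddCommGroup X] [InnerProductSpace ℝ X] [CompleteSpace X]
    (A : X →L[ℝ] X) (xdag xbar : X) (hAne : A (xdag - xbar) ≠ 0)
    (β : ℝ) (hβ0 : 0 ≤ β) (hβ1 : β < 1)
    (ψ : ℝ → ℝ) (hψcont : ContinuousOn ψ (Set.Ioi 0))
    (hψmono : StrictMonoOn ψ (Set.Ioi 0)) (hψpos : ∀ t > (0:ℝ), 0 < ψ t)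
    (hψ0 : Tendsto ψ (nhdsWithin 0 (Set.Ioi 0)) (nhds 0))
    (ε₀ : ℝ) (hε₀ : 0 < ε₀)
    (hvsc : ∀ ε : ℝ, 0 < ε → ε ≤ ε₀ →
      ⟪xdag - xbar, xdag - (xdag + ε • (xbar - xdag))⟫ ≤
        β * ‖xdag - (xdag + ε • (xbar - xdag))‖ ^ 2 +
          ψ ‖A ((xdag + ε • (xbar - xdag)) - xdag)‖) :
    0 < ‖xdag - xbar‖ ^ 2 / ‖A (xdag - xbar)‖ ∧
      ∀ c : ℝ, c < ‖xdag - xbar‖ ^ 2 / ‖A (xdag - xbar)‖ →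
        ∀ᶠ t in nhdsWithin 0 (Set.Ioi 0), c ≤ ψ t / t := by
  have hx : xdag - xbar ≠ 0 := fun h => hAne (by rw [h, map_zero])
  have ha : 0 < ‖A (xdag - xbar)‖ := norm_pos_iff.2 hAne
  have hd : 0 < ‖xdag - xbar‖ ^ 2 := pow_pos (norm_pos_iff.2 hx) 2
  set a := ‖A (xdag - xbar)‖ with ha_def
  set d := ‖xdag - xbar‖ ^ 2 with hd_def
  refine ⟨div_pos hd ha, fun c hc => ?_⟩
  have key : ∀ ε : ℝ, 0 < ε → ε ≤ ε₀ → ε * d ≤ β * (ε ^ 2 * d) + ψ (ε * a) := by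
    intro ε hε hεε
    have h := hvsc ε hε hεε
    have h1 : xdag - (xdag + ε • (xbar - xdag)) = ε • (xdag - xbar) := by
      rw [smul_sub, smul_sub]; abel
    have h2 : (xdag + ε • (xbar - xdag)) - xdag = ε • (xbar - xdag) := by abel
    rw [h1, h2] at h
    have h3 : ⟪xdag - xbar, ε • (xdag - xbar)⟫ = ε * d := by
      rw [real_inner_smul_right, real_inner_self_eq_norm_sq, hd_def]
    have h4 : ‖ε • (xdag - xbar)‖ ^ 2 = ε ^ 2 * d := by
      rw [norm_smul, Real.norm_eq_abs, abs_of_pos hε, mul_pow, hd_def]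
    have h5 : ‖A (ε • (xbar - xdag))‖ = ε * a := by
      have : (xbar - xdag) = -(xdag - xbar) := by abel
      rw [map_smul, norm_smul, Real.norm_eq_abs, abs_of_pos hε, this, map_neg, norm_neg]
    rw [h3, h4, h5] at h
    exact h
  have htend : Tendsto (fun t : ℝ => d / a - β * t * d / a ^ 2) (nhdsWithin 0 (Set.Ioi 0))
      (nhds (d / a)) := by
    have : Continuous (fun t : ℝ => d / a - β * t * d / a ^ 2) := by fun_prop
    have := this.tendsto 0
    simp only [mul_zero, zero_mul, zero_div, sub_zero] at this
    exact this.mono_left nhdsWithin_le_nhds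
  have h1 : ∀ᶠ t in nhdsWithin (0:ℝ) (Set.Ioi 0), c < d / a - β * t * d / a ^ 2 :=
    htend.eventually (eventually_gt_nhds hc)
  have h2 : Set.Ioo (0:ℝ) (ε₀ * a) ∈ nhdsWithin (0:ℝ) (Set.Ioi 0) :=
    Ioo_mem_nhdsGT_of_mem ⟨le_refl 0, by positivity⟩
  filter_upwards [h1, h2] with t hct ht
  obtain ⟨ht0, htu⟩ := ht
  have hεpos : 0 < t / a := div_pos ht0 ha
  have hεle : t / a ≤ ε₀ := by
    rw [div_le_iff₀ ha]
    exact le_of_lt htu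
  have hk := key (t / a) hεpos hεle
  rw [div_mul_cancel₀ _ (ne_of_gt ha)] at hk
  have hψt : (t / a) * d - β * ((t / a) ^ 2 * d) ≤ ψ t := by linarith
  rw [le_div_iff₀ ht0]
  have heq : (d / a - β * t * d / a ^ 2) * t = (t / a) * d - β * ((t / a) ^ 2 * d) := by
    field_simp
  have := mul_le_mul_of_nonneg_right (le_of_lt hct) (le_of_lt ht0)
  rw [heq] at this
  linarith
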